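/- arXiv:2403.02813 — 2 statements merged into one kernel-verified Lean document; each statement's English description precedes it below -/
import Mathlib

section
/- For every N ≥ 2, the map F_{SU(N)} is injective on the interior of its parameter box: if two parameter tuples lie in the open box int(B_N) (all parameters strictly between the endpoints of their respective intervals) and F_{SU(N)} takes the same value at both tuples, then the tuples are equal. -/
/-!
Euler angles for `SU(N)` (following K. Zwart, after Müger–Tuset).

We define the generalized Gell-Mann type matrices `λ_j` that occur in the Euler
parametrization of `SU(N)`, the Euler map `F_{SU(N)}`, and the parameter box `B_N`,
and state that `F_{SU(N)}` is surjective onto `SU(N)`.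

All matrices are realized in a fixed ambient size `N`; since the matrices `λ_j`
used at recursion level `n ≤ N` are supported in the top-left `n × n` block,
the recursive factor `diag(F_{SU(n-1)}, 1)` is literally the value of the
recursion at the lower level in ambient size `N`.
-/

open Matrix Real

noncomputable section

/-- `λ₀`: the matrix with `i` in the `(1,1)` entry (1-based) and zeros elsewhere. -/
def lam0 (N : ℕ) : Matrix (Fin N) (Fin N) ℂ :=
  Matrix.of fun μ ν => if μ.val = 0 ∧ ν.val = 0 then Complex.I else 0

/-- `λ_{(j+1)²-1} = diag(i,…,i,−i·j,0,…,0)` with the first `j` diagonal entries equal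
to `i` and the `(j+1)`-st equal to `−i·j`.  In particular `λ₃ = lamDiag N 1`. -/
def lamDiag (N j : ℕ) : Matrix (Fin N) (Fin N) ℂ :=
  Matrix.of fun μ ν =>
    if μ = ν then
      (if μ.val < j then Complex.I
        else if μ.val = j then -(j : ℂ) * Complex.I else 0)
    else 0

/-- `λ_{(k-1)²+1}` (for `k ≥ 2`): by the defining formula (the case `j = k-1`, even
index `k' = 2`) this is the real rotation generator `E_{1k} − E_{k1}` (1-based indices). -/
def lamRot (N k : ℕ) : Matrix (Fin N) (Fin N) ℂ :=
  Matrix.of fun μ ν =>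
    (if μ.val = 0 ∧ ν.val = k - 1 then 1 else 0) -
      (if μ.val = k - 1 ∧ ν.val = 0 then 1 else 0)

/-- `A(k)(x,y) = e^{λ₃ x} · e^{λ_{(k-1)²+1} y}`. -/
def Amat (N k : ℕ) (x y : ℝ) : Matrix (Fin N) (Fin N) ℂ :=
  NormedSpace.exp (x • lamDiag N 1) * NormedSpace.exp (y • lamRot N k)

/-- The Euler map `F_{SU(n)}` (realized in ambient dimension `N`), with parameters
`φ ψ ω : ℕ → ℝ` regarded as `1`-indexed lists: at level `n`,
`F_{SU(n)}(φ,ψ,ω) = (∏_{k=2}^{n} A(k)(φ_{k-1}, ψ_{k-1})) ·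
diag(F_{SU(n-1)}(φ_n,…; ψ_n,…; ω_1,…,ω_{n-2}), 1) · e^{λ_{n²-1} ω_{n-1}}`. -/
def FSU (N : ℕ) : ℕ → (ℕ → ℝ) → (ℕ → ℝ) → (ℕ → ℝ) → Matrix (Fin N) (Fin N) ℂ
  | 0, _, _, _ => 1
  | 1, _, _, _ => 1
  | n + 2, φ, ψ, ω =>
      (((List.range (n + 1)).map fun i => Amat N (i + 2) (φ (i + 1)) (ψ (i + 1))).prod) *
        FSU N (n + 1) (fun i => φ (i + (n + 1))) (fun i => ψ (i + (n + 1))) ω *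
        NormedSpace.exp ((ω (n + 1)) • lamDiag N (n + 1))

/-- Membership of `x` in the closed interval `[a,b]` (`s = false`) or the open
interval `(a,b)` (`s = true`). -/
def memI (s : Bool) (a x b : ℝ) : Prop := if s then a < x ∧ x < b else a ≤ x ∧ x ≤ b

/-- The parameter box `B_N` (for `s = false`) resp. its interior (for `s = true`),
defined recursively along the recursion of `FSU`: at level `n`,
`φ_1 ∈ [0,π]`, `φ_2,…,φ_{n-1} ∈ [0,2π]`, `ψ_1,…,ψ_{n-1} ∈ [0,π/2]`,
`ω_{n-1} ∈ [0, 2π/(n-1)]`, and recursively for the shifted parameters. -/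
def InBox (s : Bool) : ℕ → (ℕ → ℝ) → (ℕ → ℝ) → (ℕ → ℝ) → Prop
  | 0, _, _, _ => True
  | 1, _, _, _ => True
  | n + 2, φ, ψ, ω =>
      memI s 0 (φ 1) π ∧
      (∀ i, 2 ≤ i → i ≤ n + 1 → memI s 0 (φ i) (2 * π)) ∧
      (∀ i, 1 ≤ i → i ≤ n + 1 → memI s 0 (ψ i) (π / 2)) ∧
      memI s 0 (ω (n + 1)) (2 * π / (n + 1)) ∧
      InBox s (n + 1) (fun i => φ (i + (n + 1))) (fun i => ψ (i + (n + 1))) ω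


namespace EulerAux

set_option maxHeartbeats 1600000


attribute [local instance] Matrix.linftyOpNormedRing Matrix.linftyOpNormedAlgebra

variable {N : ℕ}

theorem exp_smul_of_cube_eq_neg (X : Matrix (Fin N) (Fin N) ℂ) (hX : X ^ 3 = -X) (y : ℝ) :
    NormedSpace.exp (y • X) = 1 + Real.sin y • X + (1 - Real.cos y) • X ^ 2 := by
  set f : ℝ → Matrix (Fin N) (Fin N) ℂ :=
    fun y => 1 + Real.sin y • X + (1 - Real.cos y) • X ^ 2 with hf
  have h3 : X ^ 2 * X = -X := by rw [← pow_succ, hX]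
  have hmul : ∀ t : ℝ, f t * X = Real.cos t • X + Real.sin t • X ^ 2 := by
    intro t
    simp only [hf, add_mul, one_mul, smul_mul_assoc, ← pow_two, h3]
    module
  have hfd : ∀ t : ℝ, HasDerivAt f (f t * X) t := by
    intro t
    have h1 : HasDerivAt f (Real.cos t • X + Real.sin t • X ^ 2) t := by
      have := (((Real.hasDerivAt_sin t).smul_const X).const_add
        (1 : Matrix (Fin N) (Fin N) ℂ)).add
        (((Real.hasDerivAt_cos t).const_sub 1).smul_const (X ^ 2))
      refine this.congr_deriv ?_
      simp
    rw [hmul t]; exact h1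
  have hed : ∀ t : ℝ, HasDerivAt (fun s : ℝ => NormedSpace.exp ((-s) • X))
      (-(NormedSpace.exp ((-t) • X) * X)) t := by
    intro t
    have h1 := hasDerivAt_exp_smul_const (𝕂 := ℝ) X (-t)
    have h2 : HasDerivAt (fun s : ℝ => -s) (-1) t := (hasDerivAt_id t).neg
    have := h1.scomp t h2
    exact this.congr_deriv (neg_one_smul ℝ _)
  have hcomm : ∀ t : ℝ, Commute X (NormedSpace.exp ((-t) • X)) := fun t =>
    ((Commute.refl X).smul_right (-t)).exp_right
  have hg : ∀ t : ℝ, HasDerivAt (fun s => f s * NormedSpace.exp ((-s) • X)) 0 t := by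
    intro t
    have h := (hfd t).mul (hed t)
    have h0 : f t * X * NormedSpace.exp ((-t) • X) + f t * -(NormedSpace.exp ((-t) • X) * X) = 0 := by
      rw [mul_assoc, mul_neg, ← (hcomm t).eq]
      exact add_neg_cancel _
    rw [← h0]; exact h
  have h00 : f 0 * NormedSpace.exp ((-(0:ℝ)) • X) = 1 := by
    simp only [hf, Real.sin_zero, Real.cos_zero, zero_smul, sub_self, neg_zero,
      NormedSpace.exp_zero, add_zero, mul_one]
  have hconst : f y * NormedSpace.exp ((-y) • X) = 1 := by
    have := is_const_of_deriv_eq_zero (f := fun s => f s * NormedSpace.exp ((-s) • X))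
      (fun s => (hg s).differentiableAt) (fun s => (hg s).deriv) y 0
    rw [this]; exact h00
  have hinv : NormedSpace.exp ((-y) • X) * NormedSpace.exp (y • X) = 1 := by
    refine (Matrix.exp_add_of_commute _ _
      (((Commute.refl X).smul_left (-y)).smul_right y)).symm.trans ?_
    simp
  calc NormedSpace.exp (y • X) = 1 * NormedSpace.exp (y • X) := (one_mul _).symm
    _ = f y * (NormedSpace.exp ((-y) • X) * NormedSpace.exp (y • X)) := by rw [← hconst, mul_assoc]
    _ = f y := by rw [hinv, mul_one]

/-- the diagonal phases of `exp (x • lamDiag N j)` -/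
def dph (N j : ℕ) (x : ℝ) : Fin N → ℂ := fun μ =>
  if μ.val < j then Complex.exp (x * Complex.I)
  else if μ.val = j then Complex.exp (-(j * x) * Complex.I) else 1

theorem exp_smul_lamDiag (j : ℕ) (x : ℝ) :
    NormedSpace.exp (x • lamDiag N j) = Matrix.diagonal (dph N j x) := by
  have h1 : lamDiag N j = Matrix.diagonal (fun μ : Fin N =>
      if μ.val < j then Complex.I else if μ.val = j then -(j : ℂ) * Complex.I else 0) := by
    ext μ ν
    by_cases h : μ = ν <;> simp [lamDiag, Matrix.diagonal, h]
  have key : ∀ z : ℂ, NormedSpace.exp z = Complex.exp z := fun z => by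
    rw [Complex.exp_eq_exp_ℂ]
  rw [h1, ← Matrix.diagonal_smul, Matrix.exp_diagonal, Pi.exp_def]
  refine congrArg Matrix.diagonal ?_
  funext μ
  simp only [dph, Pi.smul_apply]
  split_ifs with h h'
  · rw [key]; congr 1
  · have harg : x • (-(j : ℂ) * Complex.I) = -((j : ℂ) * (x : ℂ)) * Complex.I := by
      rw [Complex.real_smul]; ring
    rw [key, harg]
  · rw [smul_zero, NormedSpace.exp_zero]

theorem lamRot_rep (m : ℕ) (h : m + 1 < N) :
    lamRot N (m + 2) = Matrix.single (⟨0, by omega⟩ : Fin N) ⟨m + 1, h⟩ (1 : ℂ) -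
      Matrix.single (⟨m + 1, h⟩ : Fin N) ⟨0, by omega⟩ (1 : ℂ) := by
  ext μ ν
  simp only [lamRot, Matrix.of_apply, Matrix.sub_apply, Matrix.single, Fin.ext_iff,
    Matrix.of_apply]
  congr 2 <;> rw [eq_iff_iff] <;> omega

theorem lamRot_sq (m : ℕ) (h : m + 1 < N) :
    lamRot N (m + 2) ^ 2 = -(Matrix.single (⟨0, by omega⟩ : Fin N) ⟨0, by omega⟩ (1 : ℂ) +
      Matrix.single (⟨m + 1, h⟩ : Fin N) ⟨m + 1, h⟩ (1 : ℂ)) := by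
  have hne : (⟨m + 1, h⟩ : Fin N) ≠ ⟨0, by omega⟩ := by simp [Fin.ext_iff]
  have hne' : (⟨0, by omega⟩ : Fin N) ≠ ⟨m + 1, h⟩ := by simp [Fin.ext_iff]
  rw [lamRot_rep m h, pow_two, mul_sub, sub_mul, sub_mul,
    Matrix.single_mul_single_of_ne _ _ _ _ hne', Matrix.single_mul_single_of_ne _ _ _ _ hne,
    Matrix.single_mul_single_same, Matrix.single_mul_single_same]
  simp only [mul_one]
  abel

theorem lamRot_cube (m : ℕ) (h : m + 1 < N) :
    lamRot N (m + 2) ^ 3 = -lamRot N (m + 2) := by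
  have hne : (⟨m + 1, h⟩ : Fin N) ≠ ⟨0, by omega⟩ := by simp [Fin.ext_iff]
  have hne' : (⟨0, by omega⟩ : Fin N) ≠ ⟨m + 1, h⟩ := by simp [Fin.ext_iff]
  rw [pow_succ, lamRot_sq m h, neg_mul, lamRot_rep m h, add_mul, mul_sub, mul_sub,
    Matrix.single_mul_single_of_ne _ _ _ _ hne', Matrix.single_mul_single_of_ne _ _ _ _ hne,
    Matrix.single_mul_single_same, Matrix.single_mul_single_same]
  simp only [mul_one]
  abel

theorem exp_smul_lamRot (m : ℕ) (h : m + 1 < N) (y : ℝ) :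
    NormedSpace.exp (y • lamRot N (m + 2)) =
      1 + Real.sin y • lamRot N (m + 2) + (1 - Real.cos y) • lamRot N (m + 2) ^ 2 :=
  exp_smul_of_cube_eq_neg _ (lamRot_cube m h) y

theorem std_mulVec (a b : Fin N) (c : ℂ) (u : Fin N → ℂ) :
    Matrix.single a b c *ᵥ u = Pi.single a (c * u b) := by
  rw [Matrix.single_mulVec]
  ext i
  by_cases hi : i = a
  · subst hi; simp
  · simp [Function.update, hi, Pi.single_eq_of_ne hi]

section RotVec

variable (m : ℕ) (h : m + 1 < N) (y : ℝ) (c : ℂ)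

theorem expR_single_b :
    NormedSpace.exp (y • lamRot N (m + 2)) *ᵥ Pi.single (⟨m + 1, h⟩ : Fin N) c =
      Pi.single (⟨0, by omega⟩ : Fin N) ((Real.sin y : ℂ) * c) +
        Pi.single (⟨m + 1, h⟩ : Fin N) ((Real.cos y : ℂ) * c) := by
  have hne : (⟨m + 1, h⟩ : Fin N) ≠ ⟨0, by omega⟩ := by simp [Fin.ext_iff]
  have hR : lamRot N (m + 2) *ᵥ Pi.single (⟨m + 1, h⟩ : Fin N) c =
      Pi.single (⟨0, by omega⟩ : Fin N) c := by
    rw [lamRot_rep m h, sub_mulVec, std_mulVec, std_mulVec]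
    simp [Pi.single_eq_of_ne hne]
  have hR2 : lamRot N (m + 2) ^ 2 *ᵥ Pi.single (⟨m + 1, h⟩ : Fin N) c =
      -Pi.single (⟨m + 1, h⟩ : Fin N) c := by
    rw [lamRot_sq m h, neg_mulVec, add_mulVec, std_mulVec, std_mulVec]
    simp [Pi.single_eq_of_ne hne.symm]
  rw [exp_smul_lamRot m h, add_mulVec, add_mulVec, one_mulVec, smul_mulVec,
    smul_mulVec, hR, hR2]
  ext i
  by_cases hi : i = (⟨m + 1, h⟩ : Fin N)
  · subst hi
    simp [Pi.single_eq_of_ne hne, Complex.real_smul]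
    ring
  · by_cases hi0 : i = (⟨0, by omega⟩ : Fin N)
    · subst hi0
      simp [Pi.single_eq_of_ne hne.symm, Complex.real_smul]
    · simp [Pi.single_eq_of_ne hi, Pi.single_eq_of_ne hi0]

theorem expR_single_a :
    NormedSpace.exp (y • lamRot N (m + 2)) *ᵥ Pi.single (⟨0, by omega⟩ : Fin N) c =
      Pi.single (⟨0, by omega⟩ : Fin N) ((Real.cos y : ℂ) * c) +
        Pi.single (⟨m + 1, h⟩ : Fin N) (-(Real.sin y : ℂ) * c) := by
  have hne : (⟨m + 1, h⟩ : Fin N) ≠ ⟨0, by omega⟩ := by simp [Fin.ext_iff]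
  have hR : lamRot N (m + 2) *ᵥ Pi.single (⟨0, by omega⟩ : Fin N) c =
      -Pi.single (⟨m + 1, h⟩ : Fin N) c := by
    rw [lamRot_rep m h, sub_mulVec, std_mulVec, std_mulVec]
    simp [Pi.single_eq_of_ne hne.symm]
  have hR2 : lamRot N (m + 2) ^ 2 *ᵥ Pi.single (⟨0, by omega⟩ : Fin N) c =
      -Pi.single (⟨0, by omega⟩ : Fin N) c := by
    rw [lamRot_sq m h, neg_mulVec, add_mulVec, std_mulVec, std_mulVec]
    simp [Pi.single_eq_of_ne hne]
  rw [exp_smul_lamRot m h, add_mulVec, add_mulVec, one_mulVec, smul_mulVec,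
    smul_mulVec, hR, hR2]
  ext i
  by_cases hi : i = (⟨m + 1, h⟩ : Fin N)
  · subst hi
    simp [Pi.single_eq_of_ne hne, Complex.real_smul]
  · by_cases hi0 : i = (⟨0, by omega⟩ : Fin N)
    · subst hi0
      simp [Pi.single_eq_of_ne hne.symm, Complex.real_smul]
      ring
    · simp [Pi.single_eq_of_ne hi, Pi.single_eq_of_ne hi0]

theorem expR_single_other (h : m + 1 < N) (j : Fin N) (hj0 : j.val ≠ 0) (hjb : j.val ≠ m + 1) :
    NormedSpace.exp (y • lamRot N (m + 2)) *ᵥ Pi.single j c = Pi.single j c := by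
  have hne1 : (⟨m + 1, h⟩ : Fin N) ≠ j := by simp [Fin.ext_iff]; omega
  have hne0 : (⟨0, by omega⟩ : Fin N) ≠ j := by simp [Fin.ext_iff]; omega
  have hR : lamRot N (m + 2) *ᵥ Pi.single j c = 0 := by
    rw [lamRot_rep m h, sub_mulVec, std_mulVec, std_mulVec]
    simp [Pi.single_eq_of_ne hne1, Pi.single_eq_of_ne hne0]
  have hR2 : lamRot N (m + 2) ^ 2 *ᵥ Pi.single j c = 0 := by
    rw [lamRot_sq m h, neg_mulVec, add_mulVec, std_mulVec, std_mulVec]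
    simp [Pi.single_eq_of_ne hne1, Pi.single_eq_of_ne hne0]
  rw [exp_smul_lamRot m h, add_mulVec, add_mulVec, one_mulVec, smul_mulVec,
    smul_mulVec, hR, hR2]
  simp

theorem expD_single (j : ℕ) (x : ℝ) (μ : Fin N) :
    NormedSpace.exp (x • lamDiag N j) *ᵥ Pi.single μ c = Pi.single μ (dph N j x μ * c) := by
  rw [exp_smul_lamDiag, Matrix.diagonal_mulVec_single]

/-- the phase picked up by `e_{k-1}` from `e^{λ₃ x}`: nontrivial only for `k = 2`. -/
def ph1 (m : ℕ) (x : ℝ) : ℂ := if m = 0 then Complex.exp (-(x : ℂ) * Complex.I) else 1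

theorem dph_zero (j : ℕ) (hj : 1 ≤ j) (x : ℝ) (h0 : 0 < N) :
    dph N j x ⟨0, h0⟩ = Complex.exp ((x : ℂ) * Complex.I) := by
  have h0j : (0 : ℕ) < j := hj
  simp [dph, h0j]

theorem dph_one_b (x : ℝ) : dph N 1 x ⟨m + 1, h⟩ = ph1 m x := by
  rcases Nat.eq_zero_or_pos m with hm | hm
  · subst hm
    simp only [dph, ph1]
    norm_num
  · have h1 : ¬ (m + 1 < 1) := by omega
    have h2 : ¬ (m + 1 = 1) := by omega
    have h3 : ¬ (m = 0) := by omega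
    simp [dph, ph1, h1, h2, h3]

theorem Amat_single_b (x : ℝ) :
    Amat N (m + 2) x y *ᵥ Pi.single (⟨m + 1, h⟩ : Fin N) c =
      Pi.single (⟨0, by omega⟩ : Fin N) (Complex.exp ((x : ℂ) * Complex.I) * (Real.sin y : ℂ) * c)
        + Pi.single (⟨m + 1, h⟩ : Fin N) (ph1 m x * (Real.cos y : ℂ) * c) := by
  rw [Amat, ← Matrix.mulVec_mulVec, expR_single_b m h, Matrix.mulVec_add,
    expD_single, expD_single, dph_zero 1 le_rfl, dph_one_b m h]
  congr 1 <;> congr 1 <;> ring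

theorem Amat_single_a (x : ℝ) :
    Amat N (m + 2) x y *ᵥ Pi.single (⟨0, by omega⟩ : Fin N) c =
      Pi.single (⟨0, by omega⟩ : Fin N) (Complex.exp ((x : ℂ) * Complex.I) * (Real.cos y : ℂ) * c)
        + Pi.single (⟨m + 1, h⟩ : Fin N) (ph1 m x * (-(Real.sin y : ℂ)) * c) := by
  rw [Amat, ← Matrix.mulVec_mulVec, expR_single_a m h, Matrix.mulVec_add,
    expD_single, expD_single, dph_zero 1 le_rfl, dph_one_b m h]
  congr 1 <;> congr 1 <;> ring

theorem Amat_single_other (h : m + 1 < N) (j : Fin N) (hj0 : j.val ≠ 0) (hj1 : j.val ≠ 1)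
    (hjb : j.val ≠ m + 1) (x : ℝ) :
    Amat N (m + 2) x y *ᵥ Pi.single j c = Pi.single j c := by
  rw [Amat, ← Matrix.mulVec_mulVec, expR_single_other m y c h j hj0 hjb, expD_single]
  have : dph N 1 x j = 1 := by
    have h1 : ¬ (j.val < 1) := by omega
    simp [dph, h1, hj1]
  rw [this, one_mul]

end RotVec

/-- partial products of the `A` factors -/
def pA (N : ℕ) (φ ψ : ℕ → ℝ) (n : ℕ) : Matrix (Fin N) (Fin N) ℂ :=
  ((List.range n).map fun i => Amat N (i + 2) (φ (i + 1)) (ψ (i + 1))).prod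

theorem pA_zero (φ ψ : ℕ → ℝ) : pA N φ ψ 0 = 1 := by simp [pA]

theorem pA_succ (φ ψ : ℕ → ℝ) (n : ℕ) :
    pA N φ ψ (n + 1) = pA N φ ψ n * Amat N (n + 2) (φ (n + 1)) (ψ (n + 1)) := by
  rw [pA, List.range_succ, List.map_append, List.prod_append]
  simp [pA]

theorem pA_fix (φ ψ : ℕ → ℝ) (n : ℕ) (j : Fin N) (c : ℂ) (hj : n + 1 ≤ j.val) :
    pA N φ ψ n *ᵥ Pi.single j c = Pi.single j c := by
  induction n with
  | zero => rw [pA_zero, Matrix.one_mulVec]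
  | succ n ih =>
      have hN : n + 1 < N := by omega
      rw [pA_succ, ← Matrix.mulVec_mulVec,
        Amat_single_other n _ c hN j (by omega) (by omega) (by omega)]
      exact ih (by omega)

/-- the first column of `pA n` -/
def wv (N : ℕ) (φ ψ : ℕ → ℝ) (n : ℕ) : Fin N → ℂ := fun μ =>
  if μ.val = 0 then
    ∏ j ∈ Finset.Icc 1 n, ((Real.cos (ψ j) : ℂ) * Complex.exp ((φ j : ℂ) * Complex.I))
  else if μ.val ≤ n then
    (-(Real.sin (ψ μ.val) : ℂ)) *
      (if μ.val = 1 then Complex.exp (-(φ 1 : ℂ) * Complex.I) else 1) *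
      ∏ j ∈ Finset.Icc (μ.val + 1) n, ((Real.cos (ψ j) : ℂ) * Complex.exp ((φ j : ℂ) * Complex.I))
  else 0

theorem wv_succ (φ ψ : ℕ → ℝ) (n : ℕ) (h : n + 1 < N) :
    wv N φ ψ (n + 1) =
      (Complex.exp ((φ (n + 1) : ℂ) * Complex.I) * (Real.cos (ψ (n + 1)) : ℂ)) • wv N φ ψ n +
        Pi.single (⟨n + 1, h⟩ : Fin N) (ph1 n (φ (n + 1)) * (-(Real.sin (ψ (n + 1)) : ℂ))) := by
  funext μ
  simp only [wv, Pi.add_apply, Pi.smul_apply, smul_eq_mul, Pi.single_apply, Fin.ext_iff]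
  by_cases h0 : (μ.val : ℕ) = 0
  · simp only [eq_true h0, if_true, eq_false (show ¬ (μ.val = n + 1) by omega), if_false,
      Finset.prod_Icc_succ_top (show 1 ≤ n + 1 by omega)]
    ring
  · by_cases hle : μ.val ≤ n
    · simp only [eq_false h0, if_false, eq_true (show μ.val ≤ n + 1 by omega), if_true,
        eq_true hle, eq_false (show ¬ (μ.val = n + 1) by omega),
        Finset.prod_Icc_succ_top (show μ.val + 1 ≤ n + 1 by omega)]
      ring
    · by_cases htop : μ.val = n + 1
      · simp only [eq_false h0, if_false, eq_true (show μ.val ≤ n + 1 by omega), if_true,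
          eq_false hle, eq_true htop, ph1,
          Finset.Icc_eq_empty (show ¬ (μ.val + 1 ≤ n + 1) by omega), Finset.prod_empty]
        rcases Nat.eq_zero_or_pos n with hn | hn
        · simp only [eq_true (show μ.val = 1 by omega), if_true, eq_true hn, hn, if_pos rfl]
          rw [htop, hn]
          ring
        · simp only [eq_false (show ¬ (μ.val = 1) by omega), eq_false (show ¬ (n = 0) by omega),
            if_false]
          rw [htop]
          ring
      · simp only [eq_false h0, eq_false hle, eq_false htop, if_false,
          eq_false (show ¬ (μ.val ≤ n + 1) by omega)]
        ring

theorem wcol (φ ψ : ℕ → ℝ) (n : ℕ) (hn : n < N) :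
    pA N φ ψ n *ᵥ Pi.single (⟨0, by omega⟩ : Fin N) 1 = wv N φ ψ n := by
  induction n with
  | zero =>
      rw [pA_zero, Matrix.one_mulVec]
      funext μ
      simp only [wv, Pi.single_apply, Fin.ext_iff]
      by_cases h0 : (μ.val : ℕ) = 0
      · simp only [eq_true h0, if_true, Finset.Icc_eq_empty (show ¬ (1 ≤ 0) by omega),
          Finset.prod_empty]
      · simp only [eq_false h0, if_false, eq_false (show ¬ (μ.val ≤ 0) by omega)]
  | succ n ih =>
      have hN : n < N := by omega
      rw [pA_succ, ← Matrix.mulVec_mulVec, Amat_single_a n hn _ _ (φ (n + 1)),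
        Matrix.mulVec_add, mul_one,
        show (Complex.exp ((φ (n+1) : ℂ) * Complex.I) * (Real.cos (ψ (n+1)) : ℂ) : ℂ) =
          ((Complex.exp ((φ (n+1) : ℂ) * Complex.I) * (Real.cos (ψ (n+1)) : ℂ)) • (1:ℂ)) by simp,
        Pi.single_smul, Matrix.mulVec_smul, ih hN, pA_fix φ ψ n _ _ (by simp),
        wv_succ φ ψ n hn]
      simp only [mul_one]

theorem polar_inj' {r r' θ θ' : ℝ} (hr : 0 < r) (hr' : 0 < r')
    (h : (r : ℂ) * Complex.exp ((θ : ℂ) * Complex.I) =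
      (r' : ℂ) * Complex.exp ((θ' : ℂ) * Complex.I)) :
    r = r' ∧ ∃ m : ℤ, θ = θ' + 2 * π * m := by
  have habs : r = r' := by
    have := congrArg (‖·‖) h
    simpa [Complex.norm_exp, abs_of_pos hr, abs_of_pos hr'] using this
  refine ⟨habs, ?_⟩
  subst habs
  have hexp : Complex.exp ((θ : ℂ) * Complex.I) = Complex.exp ((θ' : ℂ) * Complex.I) :=
    mul_left_cancel₀ (by exact_mod_cast hr.ne') h
  rw [Complex.exp_eq_exp_iff_exists_int] at hexp
  obtain ⟨m, hm⟩ := hexp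
  refine ⟨m, ?_⟩
  have h2 : ((θ : ℂ) - ((θ' : ℂ) + 2 * (π : ℂ) * (m : ℂ))) * Complex.I = 0 := by
    push_cast at hm ⊢
    linear_combination hm
  have h3 : ((θ : ℂ) - ((θ' : ℂ) + 2 * (π : ℂ) * (m : ℂ))) = 0 :=
    (mul_eq_zero.mp h2).resolve_right Complex.I_ne_zero
  have h4 : ((θ : ℝ) : ℂ) = ((θ' + 2 * π * m : ℝ) : ℂ) := by
    push_cast
    linear_combination h3
  exact_mod_cast h4

theorem int_zero_of_small {δ : ℝ} {m : ℤ} (h : δ = 2 * π * m) (hb : |δ| < 2 * π) : m = 0 := by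
  by_contra hm
  have h1 : (1 : ℝ) ≤ |(m : ℝ)| := by
    have : (1 : ℤ) ≤ |m| := Int.one_le_abs (by omega)
    calc (1:ℝ) ≤ (|m| : ℤ) := by exact_mod_cast this
      _ = |(m:ℝ)| := by push_cast; rfl
  have h2 : 2 * π ≤ |δ| := by
    rw [h, abs_mul, abs_of_pos (by positivity : (0:ℝ) < 2 * π)]
    nlinarith [Real.pi_pos]
  linarith

theorem polar_inj {r r' θ θ' : ℝ} (hr : 0 < r) (hr' : 0 < r') (hb : |θ - θ'| < 2 * π)
    (h : (r : ℂ) * Complex.exp ((θ : ℂ) * Complex.I) =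
      (r' : ℂ) * Complex.exp ((θ' : ℂ) * Complex.I)) :
    r = r' ∧ θ = θ' := by
  obtain ⟨h1, m, hm⟩ := polar_inj' hr hr' h
  have : m = 0 := int_zero_of_small (by linarith) hb
  subst this
  simp at hm
  exact ⟨h1, by linarith⟩

theorem prod_polar (ψ φ : ℕ → ℝ) (s : Finset ℕ) :
    ∏ j ∈ s, ((Real.cos (ψ j) : ℂ) * Complex.exp ((φ j : ℂ) * Complex.I)) =
      ((∏ j ∈ s, Real.cos (ψ j) : ℝ) : ℂ) *
        Complex.exp (((∑ j ∈ s, φ j : ℝ) : ℂ) * Complex.I) := by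
  rw [Finset.prod_mul_distrib, ← Complex.exp_sum]
  push_cast
  rw [Finset.sum_mul]


theorem ph1_eq (m : ℕ) (x : ℝ) :
    ph1 m x = Complex.exp (((if m = 0 then -x else 0 : ℝ) : ℂ) * Complex.I) := by
  rcases Nat.eq_zero_or_pos m with hm | hm
  · subst hm; simp [ph1]
  · have : ¬ (m = 0) := by omega
    simp [ph1, this]

theorem dph_self (j : ℕ) (x : ℝ) (h : j < N) :
    dph N j x ⟨j, h⟩ = Complex.exp (-(((j : ℕ) : ℂ) * (x : ℂ)) * Complex.I) := by
  simp [dph]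

theorem dph_gt (j : ℕ) (x : ℝ) (μ : Fin N) (h : j < μ.val) : dph N j x μ = 1 := by
  have h1 : ¬ (μ.val < j) := by omega
  have h2 : ¬ (μ.val = j) := by omega
  simp [dph, h1, h2]

theorem FSU_succ (n : ℕ) (φ ψ ω : ℕ → ℝ) :
    FSU N (n + 2) φ ψ ω = pA N φ ψ (n + 1) *
      FSU N (n + 1) (fun i => φ (i + (n + 1))) (fun i => ψ (i + (n + 1))) ω *
      NormedSpace.exp ((ω (n + 1)) • lamDiag N (n + 1)) := rfl

theorem FSU_fix (m : ℕ) (φ ψ ω : ℕ → ℝ) (j : Fin N) (c : ℂ) (hj : m ≤ j.val) :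
    FSU N m φ ψ ω *ᵥ Pi.single j c = Pi.single j c := by
  induction m using Nat.twoStepInduction generalizing φ ψ ω with
  | zero => show (1 : Matrix (Fin N) (Fin N) ℂ) *ᵥ _ = _; rw [Matrix.one_mulVec]
  | one => show (1 : Matrix (Fin N) (Fin N) ℂ) *ᵥ _ = _; rw [Matrix.one_mulVec]
  | more n ih ih2 =>
      rw [FSU_succ, ← Matrix.mulVec_mulVec, ← Matrix.mulVec_mulVec, expD_single,
        dph_gt (n + 1) _ j (by omega), one_mul, ih2 _ _ _ (by omega),
        pA_fix _ _ _ _ _ (by omega)]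

theorem vcol (φ ψ : ℕ → ℝ) (n : ℕ) (h : n + 1 < N) :
    pA N φ ψ (n + 1) *ᵥ Pi.single (⟨n + 1, h⟩ : Fin N) 1 =
      (Complex.exp ((φ (n + 1) : ℂ) * Complex.I) * (Real.sin (ψ (n + 1)) : ℂ)) • wv N φ ψ n +
        Pi.single (⟨n + 1, h⟩ : Fin N) (ph1 n (φ (n + 1)) * (Real.cos (ψ (n + 1)) : ℂ)) := by
  rw [pA_succ, ← Matrix.mulVec_mulVec, Amat_single_b n h (ψ (n + 1)) 1 (φ (n + 1)),
    Matrix.mulVec_add,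
    show (Complex.exp ((φ (n + 1) : ℂ) * Complex.I) * (Real.sin (ψ (n + 1)) : ℂ) * 1 : ℂ) =
      (Complex.exp ((φ (n + 1) : ℂ) * Complex.I) * (Real.sin (ψ (n + 1)) : ℂ)) • (1 : ℂ) by simp,
    Pi.single_smul, Matrix.mulVec_smul, wcol φ ψ n (by omega), pA_fix φ ψ n _ _ (by simp),
    mul_one]

/-- the last column of `FSU N (n+2)` -/
def Vfun (N : ℕ) (φ ψ ω : ℕ → ℝ) (n : ℕ) : Fin N → ℂ := fun μ =>
  Complex.exp (-(((n + 1 : ℕ) : ℂ) * (ω (n + 1) : ℂ)) * Complex.I) *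
    ((Complex.exp ((φ (n + 1) : ℂ) * Complex.I) * (Real.sin (ψ (n + 1)) : ℂ)) * wv N φ ψ n μ +
      ph1 n (φ (n + 1)) * (Real.cos (ψ (n + 1)) : ℂ) * (if μ.val = n + 1 then 1 else 0))

theorem FSU_col (φ ψ ω : ℕ → ℝ) (n : ℕ) (h : n + 1 < N) :
    FSU N (n + 2) φ ψ ω *ᵥ Pi.single (⟨n + 1, h⟩ : Fin N) 1 = Vfun N φ ψ ω n := by
  rw [FSU_succ, ← Matrix.mulVec_mulVec, ← Matrix.mulVec_mulVec, expD_single,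
    dph_self (n + 1) _ h, mul_one,
    show (Complex.exp (-(((n + 1 : ℕ) : ℂ) * (ω (n + 1) : ℂ)) * Complex.I) : ℂ) =
      Complex.exp (-(((n + 1 : ℕ) : ℂ) * (ω (n + 1) : ℂ)) * Complex.I) • (1 : ℂ) by simp,
    Pi.single_smul, Matrix.mulVec_smul, Matrix.mulVec_smul,
    FSU_fix (n + 1) _ _ _ _ _ (by simp), vcol φ ψ n h]
  funext μ
  simp only [Vfun, Pi.smul_apply, Pi.add_apply, Pi.single_apply, Fin.ext_iff, smul_eq_mul]
  by_cases hm : μ.val = n + 1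
  · simp only [eq_true hm, if_true]
    ring
  · simp only [eq_false hm, if_false]
    ring

theorem if_phase (P : Prop) [Decidable P] (x : ℝ) :
    (if P then Complex.exp (-(x : ℂ) * Complex.I) else 1) =
      Complex.exp (((if P then -x else 0 : ℝ) : ℂ) * Complex.I) := by
  split_ifs <;> simp

theorem Vfun_top (φ ψ ω : ℕ → ℝ) (n : ℕ) (h : n + 1 < N) :
    Vfun N φ ψ ω n ⟨n + 1, h⟩ = ((Real.cos (ψ (n + 1)) : ℝ) : ℂ) *
      Complex.exp (((-(((n + 1 : ℕ) : ℝ) * ω (n + 1)) + (if n = 0 then -(φ 1) else 0) : ℝ) : ℂ)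
        * Complex.I) := by
  have hw : wv N φ ψ n ⟨n + 1, h⟩ = 0 := by
    simp only [wv]
    rw [if_neg (by omega), if_neg (by omega)]
  have hite : (if n = 0 then -(φ (n + 1)) else (0:ℝ)) = (if n = 0 then -(φ 1) else 0) := by
    rcases Nat.eq_zero_or_pos n with hn | hn
    · subst hn; norm_num
    · rw [if_neg (by omega), if_neg (by omega)]
  simp only [Vfun, hw, ph1_eq, mul_zero, zero_add,
    eq_true (show ((⟨n + 1, h⟩ : Fin N) : ℕ) = n + 1 from rfl), if_true, mul_one]
  rw [hite, show ((-(((n + 1 : ℕ) : ℝ) * ω (n + 1)) + (if n = 0 then -(φ 1) else 0) : ℝ)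
      : ℂ) * Complex.I = -(((n + 1 : ℕ) : ℂ) * (ω (n + 1) : ℂ)) * Complex.I +
      (((if n = 0 then -(φ 1) else 0 : ℝ) : ℂ)) * Complex.I by push_cast; ring,
    Complex.exp_add]
  ring

theorem Vfun_zero (φ ψ ω : ℕ → ℝ) (n : ℕ) (h0 : 0 < N) (h : n + 1 < N) :
    Vfun N φ ψ ω n ⟨0, h0⟩ = ((Real.sin (ψ (n + 1)) * ∏ j ∈ Finset.Icc 1 n, Real.cos (ψ j) : ℝ)
      : ℂ) * Complex.exp (((-(((n + 1 : ℕ) : ℝ) * ω (n + 1)) + φ (n + 1) +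
        ∑ j ∈ Finset.Icc 1 n, φ j : ℝ) : ℂ) * Complex.I) := by
  have hw : wv N φ ψ n ⟨0, h0⟩ =
      ∏ j ∈ Finset.Icc 1 n, ((Real.cos (ψ j) : ℂ) * Complex.exp ((φ j : ℂ) * Complex.I)) := by
    simp [wv]
  simp only [Vfun, hw, prod_polar,
    eq_false (show ¬ (((⟨0, h0⟩ : Fin N) : ℕ) = n + 1) by simp), if_false, mul_zero, add_zero]
  rw [show ((-(((n + 1 : ℕ) : ℝ) * ω (n + 1)) + φ (n + 1) + ∑ j ∈ Finset.Icc 1 n, φ j : ℝ) : ℂ) *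
      Complex.I = -(((n + 1 : ℕ) : ℂ) * (ω (n + 1) : ℂ)) * Complex.I +
      ((φ (n + 1) : ℝ) : ℂ) * Complex.I +
      (((∑ j ∈ Finset.Icc 1 n, φ j : ℝ) : ℂ)) * Complex.I by push_cast; ring,
    Complex.exp_add, Complex.exp_add]
  push_cast
  ring

theorem Vfun_mid (φ ψ ω : ℕ → ℝ) (n k : ℕ) (hk1 : 1 ≤ k) (hkn : k ≤ n) (h : n + 1 < N) :
    Vfun N φ ψ ω n ⟨k, by omega⟩ =
      -(((Real.sin (ψ (n + 1)) * ∏ j ∈ Finset.Icc (k + 1) n, Real.cos (ψ j)) * Real.sin (ψ k)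
        : ℝ) : ℂ) * Complex.exp (((-(((n + 1 : ℕ) : ℝ) * ω (n + 1)) + φ (n + 1) +
        ∑ j ∈ Finset.Icc (k + 1) n, φ j + (if k = 1 then -(φ 1) else 0) : ℝ) : ℂ)
        * Complex.I) := by
  have hw : wv N φ ψ n ⟨k, by omega⟩ =
      (-(Real.sin (ψ k) : ℂ)) *
        (if k = 1 then Complex.exp (-(φ 1 : ℂ) * Complex.I) else 1) *
        ∏ j ∈ Finset.Icc (k + 1) n, ((Real.cos (ψ j) : ℂ) *
          Complex.exp ((φ j : ℂ) * Complex.I)) := by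
    simp only [wv]
    rw [if_neg (show ¬ (((⟨k, by omega⟩ : Fin N) : ℕ) = 0) by simp; omega),
      if_pos (show (((⟨k, by omega⟩ : Fin N) : ℕ)) ≤ n by simp; omega)]
  simp only [Vfun, hw, prod_polar, if_phase,
    eq_false (show ¬ (((⟨k, by omega⟩ : Fin N) : ℕ) = n + 1) by simp; omega), if_false,
    mul_zero, add_zero]
  rw [show ((-(((n + 1 : ℕ) : ℝ) * ω (n + 1)) + φ (n + 1) +
        ∑ j ∈ Finset.Icc (k + 1) n, φ j + (if k = 1 then -(φ 1) else 0) : ℝ) : ℂ) *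
      Complex.I = -(((n + 1 : ℕ) : ℂ) * (ω (n + 1) : ℂ)) * Complex.I +
      ((φ (n + 1) : ℝ) : ℂ) * Complex.I +
      (((∑ j ∈ Finset.Icc (k + 1) n, φ j : ℝ) : ℂ)) * Complex.I +
      (((if k = 1 then -(φ 1) else 0 : ℝ) : ℂ)) * Complex.I by push_cast; ring,
    Complex.exp_add, Complex.exp_add, Complex.exp_add]
  push_cast
  ring

theorem recover (n : ℕ) (h : n + 1 < N) (φ ψ ω φ' ψ' ω' : ℕ → ℝ)
    (hφ1 : 0 < φ 1 ∧ φ 1 < π) (hφ1' : 0 < φ' 1 ∧ φ' 1 < π)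
    (hφ : ∀ i, 2 ≤ i → i ≤ n + 1 → 0 < φ i ∧ φ i < 2 * π)
    (hφ' : ∀ i, 2 ≤ i → i ≤ n + 1 → 0 < φ' i ∧ φ' i < 2 * π)
    (hψ : ∀ i, 1 ≤ i → i ≤ n + 1 → 0 < ψ i ∧ ψ i < π / 2)
    (hψ' : ∀ i, 1 ≤ i → i ≤ n + 1 → 0 < ψ' i ∧ ψ' i < π / 2)
    (hω : 0 < ω (n + 1) ∧ ((n : ℝ) + 1) * ω (n + 1) < 2 * π)
    (hω' : 0 < ω' (n + 1) ∧ ((n : ℝ) + 1) * ω' (n + 1) < 2 * π)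
    (hv : Vfun N φ ψ ω n = Vfun N φ' ψ' ω' n) :
    (∀ i, 1 ≤ i → i ≤ n + 1 → φ i = φ' i ∧ ψ i = ψ' i) ∧ ω (n + 1) = ω' (n + 1) := by
  have pi_pos := Real.pi_pos
  have spos : ∀ i, 1 ≤ i → i ≤ n + 1 → 0 < Real.sin (ψ i) := fun i h1 h2 =>
    Real.sin_pos_of_pos_of_lt_pi (hψ i h1 h2).1 (by linarith [(hψ i h1 h2).2])
  have spos' : ∀ i, 1 ≤ i → i ≤ n + 1 → 0 < Real.sin (ψ' i) := fun i h1 h2 =>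
    Real.sin_pos_of_pos_of_lt_pi (hψ' i h1 h2).1 (by linarith [(hψ' i h1 h2).2])
  have cpos : ∀ i, 1 ≤ i → i ≤ n + 1 → 0 < Real.cos (ψ i) := fun i h1 h2 =>
    Real.cos_pos_of_mem_Ioo ⟨by linarith [(hψ i h1 h2).1], (hψ i h1 h2).2⟩
  have cpos' : ∀ i, 1 ≤ i → i ≤ n + 1 → 0 < Real.cos (ψ' i) := fun i h1 h2 =>
    Real.cos_pos_of_mem_Ioo ⟨by linarith [(hψ' i h1 h2).1], (hψ' i h1 h2).2⟩
  have ppos : ∀ a, 1 ≤ a → 0 < ∏ j ∈ Finset.Icc a n, Real.cos (ψ j) := fun a ha =>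
    Finset.prod_pos fun j hj => cpos j (le_trans ha (Finset.mem_Icc.mp hj).1)
      (le_trans (Finset.mem_Icc.mp hj).2 (by omega))
  have ppos' : ∀ a, 1 ≤ a → 0 < ∏ j ∈ Finset.Icc a n, Real.cos (ψ' j) := fun a ha =>
    Finset.prod_pos fun j hj => cpos' j (le_trans ha (Finset.mem_Icc.mp hj).1)
      (le_trans (Finset.mem_Icc.mp hj).2 (by omega))
  have sinj : ∀ a b : ℝ, 0 < a → a < π / 2 → 0 < b → b < π / 2 →
      Real.sin a = Real.sin b → a = b := fun a b ha1 ha2 hb1 hb2 hab =>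
    Real.injOn_sin ⟨by linarith, by linarith⟩ ⟨by linarith, by linarith⟩ hab
  have cinj : ∀ a b : ℝ, 0 < a → a < π / 2 → 0 < b → b < π / 2 →
      Real.cos a = Real.cos b → a = b := fun a b ha1 ha2 hb1 hb2 hab =>
    Real.injOn_cos ⟨by linarith, by linarith⟩ ⟨by linarith, by linarith⟩ hab
  have hc1 : (0 : ℝ) < ((n + 1 : ℕ) : ℝ) := by positivity
  have hω1 : 0 < ((n : ℝ) + 1) * ω (n + 1) := mul_pos (by positivity) hω.1
  have hω1' : 0 < ((n : ℝ) + 1) * ω' (n + 1) := mul_pos (by positivity) hω'.1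
  rcases Nat.eq_zero_or_pos n with hn | hn
  · -- base case n = 0 (SU(2) step)
    subst hn
    have htop := congrFun hv ⟨0 + 1, h⟩
    rw [Vfun_top φ ψ ω 0 h, Vfun_top φ' ψ' ω' 0 h, if_pos rfl, if_pos rfl] at htop
    obtain ⟨hc, m1, hm1⟩ := polar_inj' (cpos (0 + 1) le_rfl le_rfl)
      (cpos' (0 + 1) le_rfl le_rfl) htop
    have hzero := congrFun hv ⟨0, by omega⟩
    rw [Vfun_zero φ ψ ω 0 (by omega) h, Vfun_zero φ' ψ' ω' 0 (by omega) h] at hzero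
    simp only [Finset.Icc_eq_empty (show ¬ ((1:ℕ) ≤ 0) by omega), Finset.prod_empty,
      Finset.sum_empty, mul_one, add_zero] at hzero
    obtain ⟨hs, m0, hm0⟩ := polar_inj' (spos (0 + 1) le_rfl le_rfl)
      (spos' (0 + 1) le_rfl le_rfl) hzero
    push_cast at hm1 hm0 hω1 hω1' hω hω'
    have hδ : 2 * (φ 1 - φ' 1) = 2 * π * ((m0 - m1 : ℤ) : ℝ) := by push_cast; linarith
    have hm01 : (m0 - m1 : ℤ) = 0 := int_zero_of_small hδ
      (by rw [abs_lt]; constructor <;>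
        [nlinarith [hφ1.1, hφ1.2, hφ1'.1, hφ1'.2]; nlinarith [hφ1.1, hφ1.2, hφ1'.1, hφ1'.2]])
    have hφ1eq : φ 1 = φ' 1 := by rw [hm01] at hδ; push_cast at hδ; linarith
    have hδω : ω' 1 - ω 1 = 2 * π * ((m0 : ℤ) : ℝ) := by push_cast; linarith
    have hm00 : (m0 : ℤ) = 0 := int_zero_of_small hδω
      (by rw [abs_lt]; constructor <;> [nlinarith [hω.1, hω.2, hω'.1, hω'.2];
        nlinarith [hω.1, hω.2, hω'.1, hω'.2]])
    have hωeq : ω (0 + 1) = ω' (0 + 1) := by rw [hm00] at hδω; push_cast at hδω; linarith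
    have hψ1eq : ψ 1 = ψ' 1 := cinj _ _ (hψ 1 le_rfl le_rfl).1 (hψ 1 le_rfl le_rfl).2
      (hψ' 1 le_rfl le_rfl).1 (hψ' 1 le_rfl le_rfl).2 hc
    exact ⟨fun i hi1 hi2 => by
      have : i = 1 := by omega
      subst this
      exact ⟨hφ1eq, hψ1eq⟩, hωeq⟩
  · -- case n ≥ 1
    have hn0 : ¬ (n = 0) := by omega
    have htop := congrFun hv ⟨n + 1, h⟩
    rw [Vfun_top φ ψ ω n h, Vfun_top φ' ψ' ω' n h, if_neg hn0, add_zero, if_neg hn0,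
      add_zero] at htop
    have hbtop : |(-(((n + 1 : ℕ) : ℝ) * ω (n + 1))) - (-(((n + 1 : ℕ) : ℝ) * ω' (n + 1)))|
        < 2 * π := by
      push_cast
      rw [abs_lt]
      constructor <;> linarith [hω1, hω1', hω.2, hω'.2]
    obtain ⟨hctop, hθtop⟩ := polar_inj (cpos (n + 1) (by omega) le_rfl)
      (cpos' (n + 1) (by omega) le_rfl) hbtop htop
    have hωeq : ω (n + 1) = ω' (n + 1) := by
      have h2 : ((n : ℝ) + 1) * ω (n + 1) = ((n : ℝ) + 1) * ω' (n + 1) := by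
        push_cast at hθtop; linarith
      exact mul_left_cancel₀ (by positivity) h2
    have hψtop : ψ (n + 1) = ψ' (n + 1) := cinj _ _ (hψ (n + 1) (by omega) le_rfl).1
      (hψ (n + 1) (by omega) le_rfl).2 (hψ' (n + 1) (by omega) le_rfl).1
      (hψ' (n + 1) (by omega) le_rfl).2 hctop
    set Q : ℕ → Prop := fun k =>
      ∀ j, k ≤ j → j ≤ n + 1 → (ψ j = ψ' j ∧ (k < j → φ j = φ' j)) with hQdef
    have base : Q (n + 1) := by
      intro j hj1 hj2
      have hj : j = n + 1 := by omega
      subst hj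
      exact ⟨hψtop, fun hlt => absurd hlt (by omega)⟩
    have step : ∀ k, 2 ≤ k → k ≤ n → Q (k + 1) → Q k := by
      intro k hk2 hkn hQ
      have hmid := congrFun hv ⟨k, by omega⟩
      rw [Vfun_mid φ ψ ω n k (by omega) hkn h, Vfun_mid φ' ψ' ω' n k (by omega) hkn h,
        neg_mul, neg_mul, neg_inj, if_neg (show ¬ (k = 1) by omega), add_zero,
        if_neg (show ¬ (k = 1) by omega), add_zero] at hmid
      obtain ⟨hr, m, hm⟩ := polar_inj'
        (mul_pos (mul_pos (spos (n + 1) (by omega) le_rfl) (ppos (k + 1) (by omega)))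
          (spos k (by omega) (by omega)))
        (mul_pos (mul_pos (spos' (n + 1) (by omega) le_rfl) (ppos' (k + 1) (by omega)))
          (spos' k (by omega) (by omega))) hmid
      have hprod : ∏ j ∈ Finset.Icc (k + 1) n, Real.cos (ψ j) =
          ∏ j ∈ Finset.Icc (k + 1) n, Real.cos (ψ' j) :=
        Finset.prod_congr rfl fun j hj => by
          rw [(hQ j (Finset.mem_Icc.mp hj).1
            (le_trans (Finset.mem_Icc.mp hj).2 (by omega))).1]
      have hsk : Real.sin (ψ k) = Real.sin (ψ' k) := by
        rw [hψtop, hprod] at hr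
        exact mul_left_cancel₀
          (ne_of_gt (mul_pos (spos' (n + 1) (by omega) le_rfl) (ppos' (k + 1) (by omega)))) hr
      have hψk : ψ k = ψ' k := sinj _ _ (hψ k (by omega) (by omega)).1
        (hψ k (by omega) (by omega)).2 (hψ' k (by omega) (by omega)).1
        (hψ' k (by omega) (by omega)).2 hsk
      have hTsum : (φ (n + 1) + ∑ j ∈ Finset.Icc (k + 1) n, φ j) -
          (φ' (n + 1) + ∑ j ∈ Finset.Icc (k + 1) n, φ' j) = φ (k + 1) - φ' (k + 1) := by
        rcases eq_or_lt_of_le hkn with hkn' | hkn'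
        · have : n = k := hkn'.symm
          subst this
          rw [Finset.Icc_eq_empty (by omega : ¬ (n + 1 ≤ n)), Finset.sum_empty]
          ring
        · have hφn1 : φ (n + 1) = φ' (n + 1) := (hQ (n + 1) (by omega) le_rfl).2 (by omega)
          have hsum : ∑ j ∈ Finset.Icc (k + 1) n, φ j - ∑ j ∈ Finset.Icc (k + 1) n, φ' j =
              φ (k + 1) - φ' (k + 1) := by
            rw [← Finset.sum_sub_distrib]
            rw [Finset.sum_eq_single_of_mem (k + 1) (Finset.mem_Icc.mpr ⟨le_rfl, by omega⟩)
              (fun j hj hne => by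
                rw [(hQ j (Finset.mem_Icc.mp hj).1
                  (le_trans (Finset.mem_Icc.mp hj).2 (by omega))).2
                  (by have := (Finset.mem_Icc.mp hj).1; omega)]
                ring)]
          linarith
      rw [hωeq] at hm
      push_cast at hm
      have hδ : φ (k + 1) - φ' (k + 1) = 2 * π * ((m : ℤ) : ℝ) := by push_cast; linarith
      have hm0 : (m : ℤ) = 0 := int_zero_of_small hδ
        (by rw [abs_lt]
            have b1 := hφ (k + 1) (by omega) (by omega)
            have b2 := hφ' (k + 1) (by omega) (by omega)
            constructor <;> linarith [b1.1, b1.2, b2.1, b2.2])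
      have hφk1 : φ (k + 1) = φ' (k + 1) := by rw [hm0] at hδ; push_cast at hδ; linarith
      intro j hj1 hj2
      rcases eq_or_lt_of_le hj1 with hj | hj
      · subst hj
        exact ⟨hψk, fun hlt => absurd hlt (lt_irrefl _)⟩
      · refine ⟨(hQ j (by omega) hj2).1, fun _ => ?_⟩
        rcases eq_or_lt_of_le (show k + 1 ≤ j by omega) with hj' | hj'
        · exact hj' ▸ hφk1
        · exact (hQ j (by omega) hj2).2 (by omega)
    have hQ2 : Q 2 := by
      have key : ∀ d, d ≤ n - 1 → Q (n + 1 - d) := by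
        intro d
        induction d with
        | zero => intro _; simpa using base
        | succ d ih =>
            intro hd
            rw [show n + 1 - (d + 1) = n - d by omega]
            refine step (n - d) (by omega) (by omega) ?_
            rw [show n - d + 1 = n + 1 - d by omega]
            exact ih (by omega)
      have := key (n - 1) (le_refl _)
      rwa [show n + 1 - (n - 1) = 2 by omega] at this
    -- entries 1 and 0
    have hprod2 : ∏ j ∈ Finset.Icc 2 n, Real.cos (ψ j) =
        ∏ j ∈ Finset.Icc 2 n, Real.cos (ψ' j) :=
      Finset.prod_congr rfl fun j hj => by
        rw [(hQ2 j (Finset.mem_Icc.mp hj).1 (le_trans (Finset.mem_Icc.mp hj).2 (by omega))).1]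
    have hmid1 := congrFun hv ⟨1, by omega⟩
    rw [Vfun_mid φ ψ ω n 1 le_rfl hn h, Vfun_mid φ' ψ' ω' n 1 le_rfl hn h,
      neg_mul, neg_mul, neg_inj, if_pos rfl, if_pos rfl] at hmid1
    obtain ⟨hr1, m1, hm1⟩ := polar_inj'
      (mul_pos (mul_pos (spos (n + 1) (by omega) le_rfl) (ppos 2 (by omega)))
        (spos 1 le_rfl (by omega)))
      (mul_pos (mul_pos (spos' (n + 1) (by omega) le_rfl) (ppos' 2 (by omega)))
        (spos' 1 le_rfl (by omega))) hmid1
    have hzero := congrFun hv ⟨0, by omega⟩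
    rw [Vfun_zero φ ψ ω n (by omega) h, Vfun_zero φ' ψ' ω' n (by omega) h] at hzero
    obtain ⟨hr0, m0, hm0⟩ := polar_inj'
      (mul_pos (spos (n + 1) (by omega) le_rfl) (ppos 1 le_rfl))
      (mul_pos (spos' (n + 1) (by omega) le_rfl) (ppos' 1 le_rfl)) hzero
    have hIcc : Finset.Icc 1 n = insert 1 (Finset.Icc 2 n) := by
      ext j
      simp only [Finset.mem_Icc, Finset.mem_insert]
      omega
    have h1n : (1 : ℕ) ∉ Finset.Icc 2 n := by simp
    rw [hIcc, Finset.sum_insert h1n, Finset.sum_insert h1n] at hm0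
    have hT : (φ (n + 1) + ∑ j ∈ Finset.Icc 2 n, φ j) -
        (φ' (n + 1) + ∑ j ∈ Finset.Icc 2 n, φ' j) = φ 2 - φ' 2 := by
      rcases eq_or_lt_of_le (Nat.succ_le_of_lt hn) with h1 | h1
      · have : n = 1 := h1.symm
        subst this
        rw [Finset.Icc_eq_empty (by omega : ¬ ((2:ℕ) ≤ 1)), Finset.sum_empty]
        ring
      · have hφn1 : φ (n + 1) = φ' (n + 1) := (hQ2 (n + 1) (by omega) le_rfl).2 (by omega)
        have hsum : ∑ j ∈ Finset.Icc 2 n, φ j - ∑ j ∈ Finset.Icc 2 n, φ' j = φ 2 - φ' 2 := by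
          rw [← Finset.sum_sub_distrib]
          rw [Finset.sum_eq_single_of_mem 2 (Finset.mem_Icc.mpr ⟨le_rfl, by omega⟩)
            (fun j hj hne => by
              rw [(hQ2 j (Finset.mem_Icc.mp hj).1
                (le_trans (Finset.mem_Icc.mp hj).2 (by omega))).2
                (by have := (Finset.mem_Icc.mp hj).1; omega)]
              ring)]
        linarith
    rw [hωeq] at hm1 hm0
    push_cast at hm1 hm0
    have hδ10 : 2 * (φ 1 - φ' 1) = 2 * π * ((m0 - m1 : ℤ) : ℝ) := by push_cast; linarith
    have hm01 : (m0 - m1 : ℤ) = 0 := int_zero_of_small hδ10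
      (by rw [abs_lt]
          constructor <;> nlinarith [hφ1.1, hφ1.2, hφ1'.1, hφ1'.2])
    have hφ1eq : φ 1 = φ' 1 := by rw [hm01] at hδ10; push_cast at hδ10; linarith
    have hδ2 : φ 2 - φ' 2 = 2 * π * ((m0 : ℤ) : ℝ) := by push_cast; linarith
    have hm00 : (m0 : ℤ) = 0 := int_zero_of_small hδ2
      (by rw [abs_lt]
          have b1 := hφ 2 le_rfl (by omega)
          have b2 := hφ' 2 le_rfl (by omega)
          constructor <;> linarith [b1.1, b1.2, b2.1, b2.2])
    have hφ2eq : φ 2 = φ' 2 := by rw [hm00] at hδ2; push_cast at hδ2; linarith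
    have hψ1eq : ψ 1 = ψ' 1 := by
      rw [hψtop, hprod2] at hr1
      have := mul_left_cancel₀
        (ne_of_gt (mul_pos (spos' (n + 1) (by omega) le_rfl) (ppos' 2 (by omega)))) hr1
      exact sinj _ _ (hψ 1 le_rfl (by omega)).1 (hψ 1 le_rfl (by omega)).2
        (hψ' 1 le_rfl (by omega)).1 (hψ' 1 le_rfl (by omega)).2 this
    refine ⟨fun i hi1 hi2 => ?_, hωeq⟩
    have hψi : ψ i = ψ' i := by
      rcases eq_or_lt_of_le hi1 with h1 | h1
      · exact h1 ▸ hψ1eq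
      · exact (hQ2 i (by omega) hi2).1
    have hφi : φ i = φ' i := by
      rcases Nat.lt_or_ge i 3 with h3 | h3
      · interval_cases i
        · exact hφ1eq
        · exact hφ2eq
      · exact (hQ2 i (by omega) hi2).2 (by omega)
    exact ⟨hφi, hψi⟩

theorem memI_true {a x b : ℝ} : memI true a x b ↔ a < x ∧ x < b := by simp [memI]

theorem pA_congr (φ ψ φ' ψ' : ℕ → ℝ) (n : ℕ)
    (hag : ∀ i, 1 ≤ i → i ≤ n → φ i = φ' i ∧ ψ i = ψ' i) :
    pA N φ ψ n = pA N φ' ψ' n := by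
  unfold pA
  congr 1
  apply List.map_congr_left
  intro i hi
  have hi' : i < n := List.mem_range.mp hi
  rw [(hag (i + 1) (by omega) (by omega)).1, (hag (i + 1) (by omega) (by omega)).2]

theorem isUnit_Amat (k : ℕ) (x y : ℝ) : IsUnit (Amat N k x y) :=
  (Matrix.isUnit_exp _).mul (Matrix.isUnit_exp _)

theorem isUnit_pA (φ ψ : ℕ → ℝ) (n : ℕ) : IsUnit (pA N φ ψ n) := by
  induction n with
  | zero => rw [pA_zero]; exact isUnit_one
  | succ n ih => rw [pA_succ]; exact ih.mul (isUnit_Amat _ _ _)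

theorem aux (N : ℕ) : ∀ n, n + 1 ≤ N → ∀ φ ψ ω φ' ψ' ω' : ℕ → ℝ,
    InBox true (n + 1) φ ψ ω → InBox true (n + 1) φ' ψ' ω' →
    FSU N (n + 1) φ ψ ω = FSU N (n + 1) φ' ψ' ω' →
    ((∀ i, 1 ≤ i → i ≤ (n + 1) * n / 2 → φ i = φ' i ∧ ψ i = ψ' i) ∧
      ∀ i, 1 ≤ i → i ≤ n → ω i = ω' i) := by
  intro n
  induction n with
  | zero =>
      intro _ φ ψ ω φ' ψ' ω' _ _ _
      exact ⟨fun i h1 h2 => absurd (h1.trans h2) (by omega), fun i h1 h2 => by omega⟩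
  | succ n ih =>
      intro hN φ ψ ω φ' ψ' ω' hB hB' heq
      obtain ⟨hbφ1, hbφ, hbψ, hbω, hbrec⟩ := hB
      obtain ⟨hbφ1', hbφ', hbψ', hbω', hbrec'⟩ := hB'
      rw [memI_true] at hbφ1 hbω hbφ1' hbω'
      have hcol := congrArg (fun M => M *ᵥ Pi.single (⟨n + 1, by omega⟩ : Fin N) (1 : ℂ)) heq
      rw [FSU_col φ ψ ω n (by omega), FSU_col φ' ψ' ω' n (by omega)] at hcol
      have hωb : 0 < ω (n + 1) ∧ ((n : ℝ) + 1) * ω (n + 1) < 2 * π := by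
        refine ⟨hbω.1, ?_⟩
        have h2 := (lt_div_iff₀ (show (0:ℝ) < (n : ℝ) + 1 by positivity)).mp hbω.2
        linarith [h2, mul_comm (ω (n + 1)) ((n : ℝ) + 1)]
      have hωb' : 0 < ω' (n + 1) ∧ ((n : ℝ) + 1) * ω' (n + 1) < 2 * π := by
        refine ⟨hbω'.1, ?_⟩
        have h2 := (lt_div_iff₀ (show (0:ℝ) < (n : ℝ) + 1 by positivity)).mp hbω'.2
        linarith [h2, mul_comm (ω' (n + 1)) ((n : ℝ) + 1)]
      obtain ⟨hfirst, hωtop⟩ := recover n (by omega) φ ψ ω φ' ψ' ω' hbφ1 hbφ1'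
        (fun i h1 h2 => memI_true.mp (hbφ i h1 h2)) (fun i h1 h2 => memI_true.mp (hbφ' i h1 h2))
        (fun i h1 h2 => memI_true.mp (hbψ i h1 h2)) (fun i h1 h2 => memI_true.mp (hbψ' i h1 h2))
        hωb hωb' hcol
      have hpAeq : pA N φ ψ (n + 1) = pA N φ' ψ' (n + 1) :=
        pA_congr φ ψ φ' ψ' (n + 1) (fun i h1 h2 => hfirst i h1 h2)
      have hmid : FSU N (n + 1) (fun i => φ (i + (n + 1))) (fun i => ψ (i + (n + 1))) ω =
          FSU N (n + 1) (fun i => φ' (i + (n + 1))) (fun i => ψ' (i + (n + 1))) ω' := by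
        have h1 := heq
        rw [FSU_succ, FSU_succ, hpAeq, hωtop] at h1
        have h2 := (Matrix.isUnit_exp (ω' (n + 1) • lamDiag N (n + 1))).mul_right_cancel h1
        exact (isUnit_pA φ' ψ' (n + 1)).mul_left_cancel h2
      obtain ⟨ihf, ihω⟩ := ih (by omega) _ _ _ _ _ _ hbrec hbrec' hmid
      have htri : (n + 1 + 1) * (n + 1) / 2 = (n + 1) * n / 2 + (n + 1) := by
        rw [show (n + 1 + 1) * (n + 1) = (n + 1) * n + (n + 1) * 2 by ring,
          Nat.add_mul_div_right _ _ (by omega : 0 < 2)]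
      constructor
      · intro i h1 h2
        by_cases hle : i ≤ n + 1
        · exact hfirst i h1 hle
        · rw [htri] at h2
          have h3 := ihf (i - (n + 1)) (by omega) (by omega)
          rw [show i - (n + 1) + (n + 1) = i by omega] at h3
          exact h3
      · intro i h1 h2
        by_cases htopi : i = n + 1
        · subst htopi; exact hωtop
        · exact ihω i h1 (by omega)

end EulerAux

/-- **Injectivity of the generalized Euler angles for `SU(N)` on the open box**:
if two parameter tuples lie in the interior of `B_N` and `F_{SU(N)}` takes the same
value at both, then the tuples agree (i.e. all the relevant parameters
`φ_1,…,φ_{N(N-1)/2}`, `ψ_1,…,ψ_{N(N-1)/2}`, `ω_1,…,ω_{N-1}` coincide). -/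
theorem FSU_injective_on_interior (N : ℕ) (hN : 2 ≤ N)
    (φ ψ ω φ' ψ' ω' : ℕ → ℝ)
    (h : InBox true N φ ψ ω) (h' : InBox true N φ' ψ' ω')
    (heq : FSU N N φ ψ ω = FSU N N φ' ψ' ω') :
    (∀ i, 1 ≤ i → i ≤ N * (N - 1) / 2 → φ i = φ' i ∧ ψ i = ψ' i) ∧
      (∀ i, 1 ≤ i → i ≤ N - 1 → ω i = ω' i) := by
  obtain ⟨M, rfl⟩ : ∃ M, N = M + 2 := ⟨N - 2, by omega⟩
  exact EulerAux.aux (M + 2) (M + 1) (by omega) φ ψ ω φ' ψ' ω' h h' heq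
end
end

section
/- For every N ∈ ℕ, the KAK decomposition of Sp(N) is unique up to the centralizer on the interior of 𝒜: if U, U', V, V' ∈ U(N) and y, y' ∈ ℝ^N satisfy 0 < y_1 < y_2 < ⋯ < y_N < π/2, 0 < y'_1 < y'_2 < ⋯ < y'_N < π/2, and k(U)·exp(H(y))·k(V) = k(U')·exp(H(y'))·k(V'), then y = y' and there exist signs ε_1,…,ε_N ∈ {−1,1} such that U' = U·diag(ε_1,…,ε_N) and V' = diag(ε_1,…,ε_N)·V. -/
/-!
The compact symplectic group `Sp(N)` realized inside `U(2N)`, with the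
`2N × 2N` matrices indexed by `Fin N ⊕ Fin N` (block form).
-/

open Matrix Real

noncomputable section

/-- The standard symplectic form `J = [[0, 1],[−1, 0]]` (block form). -/
def Jmat (N : ℕ) : Matrix (Fin N ⊕ Fin N) (Fin N ⊕ Fin N) ℂ :=
  Matrix.fromBlocks 0 1 (-1) 0

/-- The compact symplectic group `Sp(N) = {A ∈ U(2N) : J A Jᵀ = conj A}`,
as a set of `2N × 2N` complex matrices. -/
def SpSet (N : ℕ) : Set (Matrix (Fin N ⊕ Fin N) (Fin N ⊕ Fin N) ℂ) :=
  {A | A ∈ Matrix.unitaryGroup (Fin N ⊕ Fin N) ℂ ∧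
    Jmat N * A * (Jmat N)ᵀ = A.map (starRingEnd ℂ)}

/-- The embedding `k : U(N) → Sp(N)`, `k(U) = diag(U, conj U)` (block diagonal). -/
def kEmb (N : ℕ) (U : Matrix (Fin N) (Fin N) ℂ) :
    Matrix (Fin N ⊕ Fin N) (Fin N ⊕ Fin N) ℂ :=
  Matrix.fromBlocks U 0 0 (U.map (starRingEnd ℂ))

/-- `H(y) = [[0, D(y)],[−D(y), 0]]` with `D(y) = diag(y_1,…,y_N)`. -/
def Hmat (N : ℕ) (y : Fin N → ℝ) :
    Matrix (Fin N ⊕ Fin N) (Fin N ⊕ Fin N) ℂ :=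
  Matrix.fromBlocks 0 (Matrix.diagonal fun i => (y i : ℂ))
    (-(Matrix.diagonal fun i => (y i : ℂ))) 0

namespace SpKAK
variable {N : ℕ}

/-- Block matrix with four diagonal blocks. -/
def bd (a b c d : Fin N → ℂ) : Matrix (Fin N ⊕ Fin N) (Fin N ⊕ Fin N) ℂ :=
  fromBlocks (diagonal a) (diagonal b) (diagonal c) (diagonal d)

lemma bd_mul (a b c d a' b' c' d' : Fin N → ℂ) :
    bd a b c d * bd a' b' c' d' =
      bd (a*a' + b*c') (a*b' + b*d') (c*a' + d*c') (c*b' + d*d') := by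
  simp [bd, fromBlocks_multiply, diagonal_mul_diagonal, diagonal_add, mul_comm]

lemma bd_ext {a b c d a' b' c' d' : Fin N → ℂ} (ha : ∀ i, a i = a' i) (hb : ∀ i, b i = b' i)
    (hc : ∀ i, c i = c' i) (hd : ∀ i, d i = d' i) : bd a b c d = bd a' b' c' d' := by
  unfold bd; rw [funext ha, funext hb, funext hc, funext hd]

lemma diagonal_pi_one : (diagonal (1 : Fin N → ℂ)) = 1 := diagonal_one
lemma diagonal_pi_zero : (diagonal (0 : Fin N → ℂ)) = 0 := diagonal_zero

lemma bd_one : (bd 1 0 0 1 : Matrix (Fin N ⊕ Fin N) (Fin N ⊕ Fin N) ℂ) = 1 := by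
  rw [bd, diagonal_pi_one, diagonal_pi_zero, fromBlocks_one]

lemma bd_diag (a d : Fin N → ℂ) : bd a 0 0 d = diagonal (Sum.elim a d) := by
  rw [bd, diagonal_pi_zero, fromBlocks_diagonal]

lemma Hmat_eq_bd (y : Fin N → ℝ) :
    Hmat N y = bd 0 (fun i => (y i : ℂ)) (fun i => -(y i : ℂ)) 0 := by
  rw [Hmat, bd, diagonal_pi_zero, diagonal_neg]

/-- The matrix exponential of `H(y)` is the block rotation matrix. -/
lemma exp_Hmat (y : Fin N → ℝ) :
    NormedSpace.exp (Hmat N y) =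
      bd (fun i => (Real.cos (y i) : ℂ)) (fun i => (Real.sin (y i) : ℂ))
         (fun i => -(Real.sin (y i) : ℂ)) (fun i => (Real.cos (y i) : ℂ)) := by
  classical
  set P : Matrix (Fin N ⊕ Fin N) (Fin N ⊕ Fin N) ℂ :=
    bd 1 1 (fun _ => Complex.I) (fun _ => -Complex.I) with hP
  set Q : Matrix (Fin N ⊕ Fin N) (Fin N ⊕ Fin N) ℂ :=
    bd (fun _ => 1/2) (fun _ => -Complex.I/2) (fun _ => 1/2) (fun _ => Complex.I/2) with hQ
  have hPQ : P * Q = 1 := by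
    rw [hP, hQ, bd_mul, ← bd_one]
    apply bd_ext <;> intro i <;>
      simp only [Pi.add_apply, Pi.mul_apply, Pi.one_apply, Pi.zero_apply] <;>
      ring_nf <;> simp [Complex.I_sq] <;> ring_nf
  have hQP : Q * P = 1 := by
    rw [hP, hQ, bd_mul, ← bd_one]
    apply bd_ext <;> intro i <;>
      simp only [Pi.add_apply, Pi.mul_apply, Pi.one_apply, Pi.zero_apply] <;>
      ring_nf <;> simp [Complex.I_sq] <;> ring_nf
  set v : Fin N ⊕ Fin N → ℂ :=
    Sum.elim (fun i => Complex.I * y i) (fun i => -(Complex.I * y i)) with hv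
  have hH : Hmat N y = P * diagonal v * Q := by
    rw [hv, ← bd_diag, hP, hQ, bd_mul, bd_mul, Hmat_eq_bd]
    apply bd_ext <;> intro i <;>
      simp only [Pi.add_apply, Pi.mul_apply, Pi.one_apply, Pi.zero_apply] <;>
      ring_nf <;> simp [Complex.I_sq] <;> ring_nf
  have hexp2 : NormedSpace.exp (Hmat N y) = NormedSpace.exp (Hmat N y) :=
    rfl
  set Pu : (Matrix (Fin N ⊕ Fin N) (Fin N ⊕ Fin N) ℂ)ˣ := ⟨P, Q, hPQ, hQP⟩ with hPu
  have hconj : NormedSpace.exp (Hmat N y) = P * NormedSpace.exp (diagonal v) * Q := by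
    have := Matrix.exp_units_conj Pu (diagonal v)
    simpa [hPu, hH] using this
  have hvexp : NormedSpace.exp v = fun i => Complex.exp (v i) := by
    rw [Pi.exp_def]
    funext i
    exact (congrFun Complex.exp_eq_exp_ℂ (v i)).symm
  have hdiag : NormedSpace.exp (diagonal v) = diagonal (fun i => Complex.exp (v i)) := by
    rw [Matrix.exp_diagonal, hvexp]
  rw [hexp2, hconj, hdiag]
  have hv' : (fun i => Complex.exp (v i)) =
      Sum.elim (fun i => Complex.exp (Complex.I * y i))
        (fun i => Complex.exp (-(Complex.I * y i))) := by
    funext i; cases i <;> simp [hv]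
  rw [hv', ← bd_diag, hP, hQ, bd_mul, bd_mul]
  apply bd_ext <;> intro i <;>
    simp only [Pi.add_apply, Pi.mul_apply, Pi.one_apply, Pi.zero_apply, Complex.ofReal_cos,
      Complex.ofReal_sin, Complex.cos, Complex.sin] <;>
    ring_nf <;> simp [Complex.I_sq] <;> ring_nf

/-- The sandwich `k(U) · bd · k(V)` in block form. -/
lemma kEmb_bd (U V : Matrix (Fin N) (Fin N) ℂ) (a b c d : Fin N → ℂ) :
    kEmb N U * bd a b c d * kEmb N V =
      fromBlocks (U * diagonal a * V) (U * diagonal b * V.map (starRingEnd ℂ))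
        (U.map (starRingEnd ℂ) * diagonal c * V)
        (U.map (starRingEnd ℂ) * diagonal d * V.map (starRingEnd ℂ)) := by
  simp [kEmb, bd, fromBlocks_multiply]

/-- Rows of a unitary matrix are nonzero. -/
lemma row_ne_zero {A : Matrix (Fin N) (Fin N) ℂ} (hA : A ∈ Matrix.unitaryGroup (Fin N) ℂ)
    (i : Fin N) : ∃ j, A i j ≠ 0 := by
  by_contra hc
  push_neg at hc
  have h1 : A * star A = 1 := (Unitary.mem_iff.mp hA).2
  have h2 := congrFun (congrFun h1 i) i
  rw [Matrix.mul_apply, Matrix.one_apply_eq] at h2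
  simp [Matrix.star_eq_conjTranspose, Matrix.conjTranspose_apply, hc] at h2

/-- Key rigidity lemma: if a unitary `A` intertwines two strictly antitone real diagonal
matrices, the diagonals agree. -/
lemma key {A : Matrix (Fin N) (Fin N) ℂ} (hA : A ∈ Matrix.unitaryGroup (Fin N) ℂ)
    {d d' : Fin N → ℝ} (hd : StrictAnti d) (hd' : StrictAnti d')
    (h : ∀ i j, A i j * (d j : ℂ) = (d' i : ℂ) * A i j) : d = d' := by
  have hval : ∀ i j, A i j ≠ 0 → d j = d' i := by
    intro i j hij
    have h1 := h i j
    rw [mul_comm] at h1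
    have h2 := mul_right_cancel₀ hij h1
    exact_mod_cast h2
  choose σ hσ using fun i => row_ne_zero hA i
  have hσval : ∀ i, d (σ i) = d' i := fun i => hval i (σ i) (hσ i)
  have hσmono : StrictMono σ := by
    intro i₁ i₂ h12
    have : d (σ i₂) < d (σ i₁) := by
      rw [hσval, hσval]; exact hd' h12
    exact (hd.lt_iff_gt.mp this)
  have hσinj : Function.Injective σ := hσmono.injective
  have hσsurj : Function.Surjective σ := Finite.surjective_of_injective hσinj
  have hσid : σ = id := by
    have hr : Set.range σ = Set.range (id : Fin N → Fin N) := by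
      rw [Set.range_eq_univ.mpr hσsurj, Set.range_id]
    have hw : WellFoundedLT (Fin N) := inferInstance
    exact (@StrictMono.range_inj (Fin N) (Fin N) inferInstance inferInstance hw σ id hσmono
      strictMono_id).mp hr
  funext i
  have h3 := hσval i
  rw [hσid] at h3
  simpa using h3

end SpKAK

/-- **Uniqueness of the `KAK` decomposition of `Sp(N)` up to the centralizer, on the
interior of `𝒜`**: if `0 < y_1 < ⋯ < y_N < π/2`, `0 < y'_1 < ⋯ < y'_N < π/2` and
`k(U)·exp(H(y))·k(V) = k(U')·exp(H(y'))·k(V')`, then `y = y'` and there are signs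
`ε_i ∈ {−1,1}` with `U' = U·diag(ε)` and `V' = diag(ε)·V`. -/
theorem Sp_KAK_unique (N : ℕ) (U U' V V' : Matrix (Fin N) (Fin N) ℂ)
    (hU : U ∈ Matrix.unitaryGroup (Fin N) ℂ) (hU' : U' ∈ Matrix.unitaryGroup (Fin N) ℂ)
    (hV : V ∈ Matrix.unitaryGroup (Fin N) ℂ) (hV' : V' ∈ Matrix.unitaryGroup (Fin N) ℂ)
    (y y' : Fin N → ℝ)
    (hy : (∀ i, 0 < y i ∧ y i < π / 2) ∧ StrictMono y)
    (hy' : (∀ i, 0 < y' i ∧ y' i < π / 2) ∧ StrictMono y')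
    (heq : kEmb N U * NormedSpace.exp (Hmat N y) * kEmb N V =
      kEmb N U' * NormedSpace.exp (Hmat N y') * kEmb N V') :
    y = y' ∧ ∃ ε : Fin N → ℂ, (∀ i, ε i = 1 ∨ ε i = -1) ∧
      U' = U * Matrix.diagonal ε ∧ V' = Matrix.diagonal ε * V := by
  classical
  obtain ⟨hyb, hym⟩ := hy
  obtain ⟨hyb', hym'⟩ := hy'
  have hpi := Real.pi_pos
  rw [SpKAK.exp_Hmat, SpKAK.exp_Hmat, SpKAK.kEmb_bd, SpKAK.kEmb_bd] at heq
  set c : Fin N → ℂ := fun i => (Real.cos (y i) : ℂ) with hc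
  set s : Fin N → ℂ := fun i => (Real.sin (y i) : ℂ) with hs
  set c' : Fin N → ℂ := fun i => (Real.cos (y' i) : ℂ) with hc'
  set s' : Fin N → ℂ := fun i => (Real.sin (y' i) : ℂ) with hs'
  have eq1 : U * diagonal c * V = U' * diagonal c' * V' := by
    have h0 := congrArg Matrix.toBlocks₁₁ heq
    simpa [Matrix.toBlocks_fromBlocks₁₁] using h0
  have eq2 : U * diagonal s * V.map (starRingEnd ℂ) =
      U' * diagonal s' * V'.map (starRingEnd ℂ) := by
    have h0 := congrArg Matrix.toBlocks₁₂ heq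
    simpa [Matrix.toBlocks_fromBlocks₁₂] using h0
  set A : Matrix (Fin N) (Fin N) ℂ := star U' * U with hA
  set B : Matrix (Fin N) (Fin N) ℂ := V * star V' with hB
  have hAmem : A ∈ Matrix.unitaryGroup (Fin N) ℂ := mul_mem (Unitary.star_mem hU') hU
  have hBmem : B ∈ Matrix.unitaryGroup (Fin N) ℂ := mul_mem hV (Unitary.star_mem hV')
  -- eq1' : A C B = C'
  have eq1' : A * diagonal c * B = diagonal c' := by
    calc A * diagonal c * B = star U' * (U * diagonal c * V) * star V' := by
          rw [hA, hB]; simp only [Matrix.mul_assoc]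
      _ = star U' * (U' * diagonal c' * V') * star V' := by rw [eq1]
      _ = (star U' * U') * (diagonal c' * (V' * star V')) := by simp only [Matrix.mul_assoc]
      _ = diagonal c' := by rw [hU'.1, hV'.2, Matrix.one_mul, Matrix.mul_one]
  -- eq2' : A S (conj B) = S'
  have hmapV' : V'.map (starRingEnd ℂ) * (star V').map (starRingEnd ℂ) = 1 := by
    rw [← Matrix.map_mul, hV'.2, Matrix.map_one _ (map_zero _) (map_one _)]
  have eq2' : A * diagonal s * B.map (starRingEnd ℂ) = diagonal s' := by
    have hVmap : V.map (starRingEnd ℂ) * (star V').map (starRingEnd ℂ) =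
        B.map (starRingEnd ℂ) := by rw [hB, Matrix.map_mul]
    calc A * diagonal s * B.map (starRingEnd ℂ)
        = star U' * (U * diagonal s * V.map (starRingEnd ℂ)) * (star V').map (starRingEnd ℂ) := by
          rw [hA, ← hVmap]; simp only [Matrix.mul_assoc]
      _ = star U' * (U' * diagonal s' * V'.map (starRingEnd ℂ)) *
            (star V').map (starRingEnd ℂ) := by rw [eq2]
      _ = (star U' * U') * (diagonal s' *
            (V'.map (starRingEnd ℂ) * (star V').map (starRingEnd ℂ))) := by
          simp only [Matrix.mul_assoc]
      _ = diagonal s' := by rw [hU'.1, hmapV', Matrix.one_mul, Matrix.mul_one]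
  -- eq3 : A C² A* = C'²
  have hcstar : star (diagonal c) = diagonal c := by
    have h0 : star c = c := by
      funext i
      simp only [Pi.star_apply, hc, Complex.star_def, Complex.conj_ofReal]
    rw [Matrix.star_eq_conjTranspose, Matrix.diagonal_conjTranspose, h0]
  have hc'star : star (diagonal c') = diagonal c' := by
    have h0 : star c' = c' := by
      funext i
      simp only [Pi.star_apply, hc', Complex.star_def, Complex.conj_ofReal]
    rw [Matrix.star_eq_conjTranspose, Matrix.diagonal_conjTranspose, h0]
  have eq3 : A * diagonal (fun i => c i * c i) * star A = diagonal (fun i => c' i * c' i) := by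
    have h1 : star B * (diagonal c * star A) = diagonal c' := by
      have h2 := congrArg star eq1'
      rwa [Matrix.star_mul (A * diagonal c) B, Matrix.star_mul A (diagonal c), hcstar,
        hc'star] at h2
    calc A * diagonal (fun i => c i * c i) * star A
        = A * diagonal c * (diagonal c * star A) := by
          rw [← diagonal_mul_diagonal]; simp only [Matrix.mul_assoc]
      _ = A * diagonal c * (B * (star B * (diagonal c * star A))) := by
          rw [← Matrix.mul_assoc B, hBmem.2, Matrix.one_mul]
      _ = A * diagonal c * (B * diagonal c') := by rw [h1]
      _ = (A * diagonal c * B) * diagonal c' := by simp only [Matrix.mul_assoc]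
      _ = diagonal c' * diagonal c' := by rw [eq1']
      _ = diagonal (fun i => c' i * c' i) := diagonal_mul_diagonal _ _
  have eq4 : A * diagonal (fun i => c i * c i) = diagonal (fun i => c' i * c' i) * A := by
    calc A * diagonal (fun i => c i * c i)
        = A * diagonal (fun i => c i * c i) * (star A * A) := by
          rw [hAmem.1, Matrix.mul_one]
      _ = (A * diagonal (fun i => c i * c i) * star A) * A := by simp only [Matrix.mul_assoc]
      _ = diagonal (fun i => c' i * c' i) * A := by rw [eq3]
  have hkey : ∀ i j, A i j * ((Real.cos (y j) * Real.cos (y j) : ℝ) : ℂ) =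
      ((Real.cos (y' i) * Real.cos (y' i) : ℝ) : ℂ) * A i j := by
    intro i j
    have h0 := congrFun (congrFun eq4 i) j
    rw [Matrix.mul_diagonal, Matrix.diagonal_mul] at h0
    push_cast
    simpa [hc, hc'] using h0
  -- strict antitonicity of cos²∘y
  have hanti : StrictAnti (fun i => Real.cos (y i) * Real.cos (y i)) := by
    intro i j hij
    have hcj : 0 < Real.cos (y j) :=
      Real.cos_pos_of_mem_Ioo ⟨by linarith [(hyb j).1], (hyb j).2⟩
    have hlt : Real.cos (y j) < Real.cos (y i) :=
      Real.cos_lt_cos_of_nonneg_of_le_pi (le_of_lt (hyb i).1)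
        (by linarith [(hyb j).2]) (hym hij)
    exact mul_self_lt_mul_self (le_of_lt hcj) hlt
  have hanti' : StrictAnti (fun i => Real.cos (y' i) * Real.cos (y' i)) := by
    intro i j hij
    have hcj : 0 < Real.cos (y' j) :=
      Real.cos_pos_of_mem_Ioo ⟨by linarith [(hyb' j).1], (hyb' j).2⟩
    have hlt : Real.cos (y' j) < Real.cos (y' i) :=
      Real.cos_lt_cos_of_nonneg_of_le_pi (le_of_lt (hyb' i).1)
        (by linarith [(hyb' j).2]) (hym' hij)
    exact mul_self_lt_mul_self (le_of_lt hcj) hlt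
  have hd2 : (fun i => Real.cos (y i) * Real.cos (y i)) =
      (fun i => Real.cos (y' i) * Real.cos (y' i)) := SpKAK.key hAmem hanti hanti' hkey
  have hyy : y = y' := by
    funext i
    have h1 : Real.cos (y i) * Real.cos (y i) = Real.cos (y' i) * Real.cos (y' i) :=
      congrFun hd2 i
    have hcy : 0 ≤ Real.cos (y i) :=
      le_of_lt (Real.cos_pos_of_mem_Ioo ⟨by linarith [(hyb i).1], (hyb i).2⟩)
    have hcy' : 0 ≤ Real.cos (y' i) :=
      le_of_lt (Real.cos_pos_of_mem_Ioo ⟨by linarith [(hyb' i).1], (hyb' i).2⟩)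
    have h2 : Real.cos (y i) = Real.cos (y' i) := (mul_self_inj hcy hcy').mp h1
    exact Real.injOn_cos ⟨le_of_lt (hyb i).1, by linarith [(hyb i).2]⟩
      ⟨le_of_lt (hyb' i).1, by linarith [(hyb' i).2]⟩ h2
  subst hyy
  refine ⟨rfl, ?_⟩
  -- now s' = s
  have hss : s' = s := by rw [hs', hs]
  rw [hss] at eq2'
  have hcc : c' = c := by rw [hc', hc]
  rw [hcc] at eq1' <;> skip
  -- A is diagonal
  have hAoff : ∀ i j, i ≠ j → A i j = 0 := by
    intro i j hij
    by_contra h0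
    have h1 := hkey i j
    rw [mul_comm] at h1
    have h2 := mul_right_cancel₀ h0 h1
    have h3 : Real.cos (y j) * Real.cos (y j) = Real.cos (y i) * Real.cos (y i) := by
      exact_mod_cast h2
    exact hij (hanti.injective h3).symm
  set a : Fin N → ℂ := fun i => A i i with ha
  have hAdiag : A = diagonal a := by
    ext i j
    by_cases hij : i = j
    · subst hij; rw [Matrix.diagonal_apply_eq]
    · rw [Matrix.diagonal_apply_ne _ hij]; exact hAoff i j hij
  -- |a i| = 1
  have hstar : ∀ i, (starRingEnd ℂ) (a i) * a i = 1 := by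
    intro i
    have h1 : star A * A = 1 := hAmem.1
    rw [hAdiag, Matrix.star_eq_conjTranspose, Matrix.diagonal_conjTranspose,
      diagonal_mul_diagonal] at h1
    have h2 := congrFun (congrFun h1 i) i
    simp only [Matrix.diagonal_apply_eq, Matrix.one_apply_eq, Pi.star_apply,
      Complex.star_def] at h2
    exact h2
  have hane : ∀ i, a i ≠ 0 := by
    intro i h0
    have h1 := hstar i
    rw [h0] at h1
    simp at h1
  have hcne : ∀ i, c i ≠ 0 := by
    intro i
    have h0 : 0 < Real.cos (y i) :=
      Real.cos_pos_of_mem_Ioo ⟨by linarith [(hyb i).1], (hyb i).2⟩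
    show ((Real.cos (y i) : ℝ) : ℂ) ≠ 0
    exact Complex.ofReal_ne_zero.mpr (ne_of_gt h0)
  -- B = diagonal a⁻¹
  have hBdiag : B = diagonal (fun i => (a i)⁻¹) := by
    have h1 : diagonal (fun i => a i * c i) * B = diagonal c := by
      rw [← diagonal_mul_diagonal, ← hAdiag]; exact eq1'
    have h2 := congrArg (fun X => diagonal (fun i => (a i * c i)⁻¹) * X) h1
    rw [← Matrix.mul_assoc, diagonal_mul_diagonal, diagonal_mul_diagonal] at h2
    have h3 : (fun i => (a i * c i)⁻¹ * (a i * c i)) = (fun _ => (1 : ℂ)) := by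
      funext i
      exact inv_mul_cancel₀ (mul_ne_zero (hane i) (hcne i))
    rw [h3, diagonal_one, Matrix.one_mul] at h2
    have h4 : (fun i => (a i * c i)⁻¹ * c i) = (fun i => (a i)⁻¹) := by
      funext i
      rw [mul_inv, mul_assoc, inv_mul_cancel₀ (hcne i), mul_one]
    rw [h2]
    exact congrArg diagonal h4
  have hconja : ∀ i, (starRingEnd ℂ) (a i) = (a i)⁻¹ := by
    intro i
    exact eq_inv_of_mul_eq_one_left (hstar i)
  have hBmap : B.map (starRingEnd ℂ) = diagonal a := by
    have h4 : (fun i => (starRingEnd ℂ) ((a i)⁻¹)) = a := by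
      funext i
      rw [map_inv₀, hconja, inv_inv]
    rw [hBdiag, Matrix.diagonal_map (map_zero _)]
    exact congrArg diagonal h4
  -- a i = ± 1
  have hsne : ∀ i, s i ≠ 0 := by
    intro i
    have h0 : 0 < Real.sin (y i) :=
      Real.sin_pos_of_pos_of_lt_pi (hyb i).1 (by linarith [(hyb i).2])
    show ((Real.sin (y i) : ℝ) : ℂ) ≠ 0
    exact Complex.ofReal_ne_zero.mpr (ne_of_gt h0)
  rw [hAdiag, hBmap] at eq2'
  have haa : ∀ i, a i * a i = 1 := by
    intro i
    have h0 := eq2'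
    rw [diagonal_mul_diagonal, diagonal_mul_diagonal] at h0
    have h2 := congrFun (congrFun h0 i) i
    simp only [Matrix.diagonal_apply_eq] at h2
    have h3 : (a i * a i) * s i = 1 * s i := by rw [one_mul]; linear_combination h2
    exact mul_right_cancel₀ (hsne i) h3
  have hsign : ∀ i, a i = 1 ∨ a i = -1 := fun i => mul_self_eq_one_iff.mp (haa i)
  have hdd : diagonal a * diagonal a = 1 := by
    rw [diagonal_mul_diagonal]
    have h0 : (fun i => a i * a i) = (fun _ => (1 : ℂ)) := funext haa
    rw [h0, diagonal_one]
  -- U' = U * diagonal a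
  have hUA : U = U' * diagonal a := by
    rw [← hAdiag]
    calc U = (U' * star U') * U := by rw [hU'.2, Matrix.one_mul]
      _ = U' * A := by rw [hA, Matrix.mul_assoc]
  have hU'eq : U' = U * diagonal a := by
    rw [hUA, Matrix.mul_assoc, hdd, Matrix.mul_one]
  -- V' = diagonal a * V
  have hainv : ∀ i, (a i)⁻¹ = a i := fun i => inv_eq_of_mul_eq_one_right (haa i)
  have hBdiag' : B = diagonal a := by
    rw [hBdiag]
    exact congrArg diagonal (funext hainv)
  have hVA : V = diagonal a * V' := by
    rw [← hBdiag']
    calc V = V * (star V' * V') := by rw [hV'.1, Matrix.mul_one]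
      _ = B * V' := by rw [hB, Matrix.mul_assoc]
  have hV'eq : V' = diagonal a * V := by
    calc V' = (diagonal a * diagonal a) * V' := by rw [hdd, Matrix.one_mul]
      _ = diagonal a * (diagonal a * V') := by rw [Matrix.mul_assoc]
      _ = diagonal a * V := by rw [← hVA]
  exact ⟨a, hsign, hU'eq, hV'eq⟩
end
end
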